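/- Let G be a complete graph on n ≥ 3 vertices whose edges are 3-coloured, and suppose that for every colour c, no set of 3 vertices strongly c-dominates at least 2n/3 vertices. Assume moreover that for all n ≥ 2 and any 2-coloured complete graph on n vertices there is a colour c and a set of at most 3 vertices strongly c-dominating at least 7n/8 vertices (the Erdős–Faudree–Gyárfás–Schelp theorem for t = 3). Then G contains a vertex v with |A_v| = 3, i.e., all three colours appear on edges incident to v. -/
import Mathlib


/-- The set of colours appearing on edges incident to `w`. -/
def colourSet {V : Type*} (col : V → V → ℕ) (w : V) : Set ℕ :=
  {c | ∃ u, u ≠ w ∧ col w u = c}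

/-- a counterexample to the 2/3 theorem contains a vertex
incident to all three colours, assuming the Erdős–Faudree–Gyárfás–Schelp
theorem for `t = 3` on 2-coloured complete graphs. -/
theorem stmt_5 {V : Type*} [Fintype V] [DecidableEq V]
    (n : ℕ) (hn : Fintype.card V = n) (hn3 : 3 ≤ n)
    (col : V → V → ℕ) (hsym : ∀ x y, col x y = col y x)
    (hcol : ∀ x y : V, x ≠ y → col x y ∈ ({1, 2, 3} : Set ℕ))
    (hcounter : ∀ c ∈ ({1, 2, 3} : Set ℕ), ∀ S : Finset V, S.card = 3 →
      3 * {b : V | ∃ a ∈ S, a ≠ b ∧ col a b = c}.ncard < 2 * n)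
    (hEFGS : ∀ m : ℕ, 2 ≤ m → ∀ col' : Fin m → Fin m → ℕ,
      (∀ x y, col' x y = col' y x) →
      (∀ x y : Fin m, x ≠ y → col' x y ∈ ({1, 2, 3} : Set ℕ)) →
      (∃ c₀ ∈ ({1, 2, 3} : Set ℕ), ∀ x y : Fin m, x ≠ y → col' x y ≠ c₀) →
      ∃ c ∈ ({1, 2, 3} : Set ℕ), ∃ S : Finset (Fin m), S.card ≤ 3 ∧
        7 * m ≤ 8 * {b : Fin m | ∃ a ∈ S, a ≠ b ∧ col' a b = c}.ncard) :
    ∃ v : V, colourSet col v = {1, 2, 3} := by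
  by_contra hno
  push_neg at hno
  -- every vertex misses some colour
  have hmiss : ∀ v : V, ∃ c, c ∈ ({1, 2, 3} : Set ℕ) ∧ ∀ u, u ≠ v → col v u ≠ c := by
    intro v
    by_contra h
    push_neg at h
    apply hno v
    apply Set.Subset.antisymm
    · rintro c ⟨u, hu, rfl⟩
      exact hcol v u (fun e => hu e.symm)
    · intro c hc
      obtain ⟨u, hu, hcu⟩ := h c hc
      exact ⟨u, hu, hcu⟩
  choose m hm1 hm2 using hmiss
  have hm1' : ∀ v : V, m v = 1 ∨ m v = 2 ∨ m v = 3 := by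
    intro v
    have := hm1 v
    simpa [Set.mem_insert_iff, Set.mem_singleton_iff] using this
  have hcol' : ∀ x y : V, x ≠ y → col x y = 1 ∨ col x y = 2 ∨ col x y = 3 := by
    intro x y hxy
    have := hcol x y hxy
    simpa [Set.mem_insert_iff, Set.mem_singleton_iff] using this
  -- edge colours avoid missing colours of both endpoints
  have hedge : ∀ a b : V, a ≠ b → col a b ≠ m a ∧ col a b ≠ m b := by
    intro a b hab
    refine ⟨hm2 a b (Ne.symm hab), ?_⟩
    rw [hsym a b]
    exact hm2 b a hab
  have huniv : (Set.univ : Set V).ncard = n := by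
    rw [Set.ncard_univ, Nat.card_eq_fintype_card, hn]
  -- key counting lemma from the counterexample hypothesis
  have key : ∀ a b : V, m a ≠ m b →
      3 * (({v : V | m v = m a}).ncard + ({v : V | m v = m b}).ncard) < 2 * n := by
    intro a b hab
    have hane : a ≠ b := fun h => hab (by rw [h])
    obtain ⟨S, hS1, -, hS2⟩ :=
      Finset.exists_subsuperset_card_eq (n := 3) (Finset.subset_univ ({a, b} : Finset V))
        (le_trans (Finset.card_insert_le _ _) (by simp)) (by rw [Finset.card_univ, hn]; omega)
    set k : ℕ := 6 - m a - m b with hkdef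
    have hka := hm1' a
    have hkb := hm1' b
    have hk1 : k ∈ ({1, 2, 3} : Set ℕ) := by
      simp only [Set.mem_insert_iff, Set.mem_singleton_iff]
      omega
    have hdom : {v : V | m v = m a} ∪ {v : V | m v = m b} ⊆
        {v : V | ∃ s ∈ S, s ≠ v ∧ col s v = k} := by
      rintro v (hv | hv)
      · simp only [Set.mem_setOf_eq] at hv
        have hvb : b ≠ v := fun h => hab (by rw [← hv, ← h])
        refine ⟨b, hS1 (by simp), hvb, ?_⟩
        have h1 := (hedge b v hvb).1
        have h2 := (hedge b v hvb).2
        have h3 := hcol' b v hvb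
        rw [hv] at h2
        omega
      · simp only [Set.mem_setOf_eq] at hv
        have hva : a ≠ v := fun h => hab (by rw [← hv, ← h])
        refine ⟨a, hS1 (by simp), hva, ?_⟩
        have h1 := (hedge a v hva).1
        have h2 := (hedge a v hva).2
        have h3 := hcol' a v hva
        rw [hv] at h2
        omega
    have h1 := hcounter k hk1 S hS2
    have hdisj : Disjoint {v : V | m v = m a} {v : V | m v = m b} := by
      rw [Set.disjoint_left]
      intro v hva hvb
      exact hab (hva.symm.trans hvb)
    have hunion := Set.ncard_union_eq hdisj (Set.toFinite _) (Set.toFinite _)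
    have hle := Set.ncard_le_ncard hdom (Set.toFinite _)
    omega
  by_cases hconst : ∀ v w : V, m v = m w
  · -- graph is 2-coloured, use EFGS
    have hne : Nonempty V := by
      rw [← Fintype.card_pos_iff, hn]; omega
    obtain ⟨v0⟩ := hne
    let f : Fin n ≃ V := (Fintype.equivFinOfCardEq hn).symm
    obtain ⟨c, hc, S, hScard, hSdom⟩ :=
      hEFGS n (by omega) (fun x y => col (f x) (f y)) (fun x y => hsym _ _)
        (fun x y hxy => hcol _ _ (fun h => hxy (f.injective h)))
        ⟨m v0, hm1 v0, fun x y hxy h => by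
          have hne' : f y ≠ f x := fun h' => hxy (f.injective h'.symm)
          exact hm2 (f x) (f y) hne' (h.trans (hconst v0 (f x)))⟩
    obtain ⟨T, hT1, -, hT2⟩ :=
      Finset.exists_subsuperset_card_eq (n := 3) (Finset.subset_univ (S.image f))
        (le_trans Finset.card_image_le hScard) (by rw [Finset.card_univ, hn]; omega)
    have hsub : f '' {b : Fin n | ∃ a ∈ S, a ≠ b ∧ col (f a) (f b) = c} ⊆
        {b : V | ∃ a ∈ T, a ≠ b ∧ col a b = c} := by
      rintro v ⟨b, ⟨a, haS, hab, hcab⟩, rfl⟩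
      exact ⟨f a, hT1 (Finset.mem_image_of_mem f haS), fun h => hab (f.injective h), hcab⟩
    have himg := Set.ncard_image_of_injective
      {b : Fin n | ∃ a ∈ S, a ≠ b ∧ col (f a) (f b) = c} f.injective
    have hle := Set.ncard_le_ncard hsub (Set.toFinite _)
    have h1 := hcounter c hc T hT2
    omega
  · -- at least two missing-colour classes
    push_neg at hconst
    obtain ⟨a, b, hab⟩ := hconst
    by_cases hthree : ∃ c : V, m c ≠ m a ∧ m c ≠ m b
    · obtain ⟨c, hca, hcb⟩ := hthree
      have k1 := key a b hab
      have k2 := key a c (Ne.symm hca)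
      have k3 := key b c (Ne.symm hcb)
      have hcover : (Set.univ : Set V) ⊆
          {v : V | m v = m a} ∪ {v : V | m v = m b} ∪ {v : V | m v = m c} := by
        intro v _
        have h1 := hm1' v
        have h2 := hm1' a
        have h3 := hm1' b
        have h4 := hm1' c
        simp only [Set.mem_union, Set.mem_setOf_eq]
        omega
      have hle := Set.ncard_le_ncard hcover (Set.toFinite _)
      have hu1 := Set.ncard_union_le ({v : V | m v = m a} ∪ {v : V | m v = m b})
        {v : V | m v = m c}
      have hu2 := Set.ncard_union_le {v : V | m v = m a} {v : V | m v = m b}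
      omega
    · push_neg at hthree
      have k1 := key a b hab
      have hcover : (Set.univ : Set V) ⊆ {v : V | m v = m a} ∪ {v : V | m v = m b} := by
        intro v _
        rcases eq_or_ne (m v) (m a) with h | h
        · exact Or.inl h
        · exact Or.inr (hthree v h)
      have hle := Set.ncard_le_ncard hcover (Set.toFinite _)
      have hu2 := Set.ncard_union_le {v : V | m v = m a} {v : V | m v = m b}
      omega
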